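/- For pairs of complex numbers x = (x₁,x₂), y = (y₁,y₂) define x·y = (x₁y₁, x₁y₂+x₂), and when x₁y₂+x₂ ≠ 0 define x*y = (y₁x₂(x₁y₂+x₂)⁻¹, y₂(x₁y₂+x₂)⁻¹). Let x,y,z ∈ ℂ² and suppose d₁ := x₁y₂+x₂ ≠ 0, d₂ := x₁y₁z₂+x₁y₂+x₂ ≠ 0 and d₃ := y₁z₂+y₂ ≠ 0. Then (x*y)·((x·y)*z) = x*(y·z) and (x*y)*((x·y)*z) = y*z, all occurring star operations having nonzero denominators. -/

import Mathlib

/-- The operation `x·y = (x₁y₁, x₁y₂+x₂)` on pairs of complex numbers. -/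
noncomputable def cdot (x y : ℂ × ℂ) : ℂ × ℂ :=
  (x.1 * y.1, x.1 * y.2 + x.2)

/-- The star operation `x*y = (y₁x₂(x₁y₂+x₂)⁻¹, y₂(x₁y₂+x₂)⁻¹)` on pairs of
complex numbers (defined when `x₁y₂+x₂ ≠ 0`). -/
noncomputable def cstar (x y : ℂ × ℂ) : ℂ × ℂ :=
  (y.1 * x.2 * (x.1 * y.2 + x.2)⁻¹, y.2 * (x.1 * y.2 + x.2)⁻¹)

/-- for `x, y, z ∈ ℂ²` with `d₁ := x₁y₂+x₂ ≠ 0`,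
`d₂ := x₁y₁z₂+x₁y₂+x₂ ≠ 0` and `d₃ := y₁z₂+y₂ ≠ 0` one has
`(x*y)·((x·y)*z) = x*(y·z)` and `(x*y)*((x·y)*z) = y*z`, and all occurring
star operations have nonzero denominators. -/
theorem stmt6 (x y z : ℂ × ℂ)
    (hd1 : x.1 * y.2 + x.2 ≠ 0)
    (hd2 : x.1 * y.1 * z.2 + x.1 * y.2 + x.2 ≠ 0)
    (hd3 : y.1 * z.2 + y.2 ≠ 0) :
    cdot (cstar x y) (cstar (cdot x y) z) = cstar x (cdot y z) ∧
    cstar (cstar x y) (cstar (cdot x y) z) = cstar y z ∧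
    (cdot x y).1 * z.2 + (cdot x y).2 ≠ 0 ∧
    x.1 * (cdot y z).2 + x.2 ≠ 0 ∧
    (cstar x y).1 * (cstar (cdot x y) z).2 + (cstar x y).2 ≠ 0 := by
  set A := x.1 * y.2 + x.2 with hA
  set B := x.1 * y.1 * z.2 + x.1 * y.2 + x.2 with hB
  set C := y.1 * z.2 + y.2 with hC
  -- component computations
  have w1 : cstar x y = (y.1 * x.2 * A⁻¹, y.2 * A⁻¹) := rfl
  have w2 : cstar (cdot x y) z = (z.1 * A * B⁻¹, z.2 * B⁻¹) := by
    simp only [cstar, cdot]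
    rw [show x.1 * y.1 * z.2 + (x.1 * y.2 + x.2) = B by rw [hB]; ring]
  have w3 : cstar x (cdot y z) = (y.1 * z.1 * x.2 * B⁻¹, (y.1 * z.2 + y.2) * B⁻¹) := by
    simp only [cstar, cdot]
    rw [show x.1 * (y.1 * z.2 + y.2) + x.2 = B by rw [hB]; ring]
  have h5 : (cstar x y).1 * (cstar (cdot x y) z).2 + (cstar x y).2 = C * B⁻¹ := by
    rw [w1, w2]
    field_simp
    rw [hC]; ring
  refine ⟨?_, ?_, ?_, ?_, ?_⟩
  · rw [w1, w2, w3, cdot]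
    refine Prod.ext ?_ ?_ <;> (simp only; field_simp; try ring)
  · rw [cstar, h5, w1, w2, cstar]
    simp only
    have hd3' : y.1 * z.2 + y.2 ≠ 0 := hd3
    refine Prod.ext ?_ ?_ <;> (simp only; rw [hC]; field_simp; try ring)
  · simp only [cdot]
    rw [show x.1 * y.1 * z.2 + (x.1 * y.2 + x.2) = B by rw [hB]; ring]
    exact hd2
  · simp only [cdot]
    rw [show x.1 * (y.1 * z.2 + y.2) + x.2 = B by rw [hB]; ring]
    exact hd2
  · rw [h5]
    exact mul_ne_zero hd3 (inv_ne_zero hd2)
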